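/- Reversal identity for the q-epsilon tensor: ε_{q^{-1}}^{j_1...j_N} = (−1)^{⌊N/2⌋} ε_q^{j_N ... j_1}, where ε_{q^{-1}} is the epsilon tensor built from the inverse parameters q(a,b)^{-1}. -/

import Mathlib

/-- The q-epsilon tensor on `N` letters: `ε_q^{1...N} = 1`, it vanishes on
tuples with a repeated index, and swapping two adjacent entries `...ab...`
produces a factor `−q(a,b)` (so `ε_q^{...ab...} = −q(a,b) ε_q^{...ba...}`).
Explicitly, on an injective tuple it is the product over all inversions of
the corresponding factors `−q`. -/
def epsQ {N : ℕ} (q : Fin N → Fin N → ℂ) (i : Fin N → Fin N) : ℂ :=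
  if Function.Injective i then
    ∏ p ∈ Finset.univ.filter (fun p : Fin N × Fin N => p.1 < p.2 ∧ i p.2 < i p.1),
      (-(q (i p.1) (i p.2)))
  else 0


section EpsQAux
open Finset

lemma fixed_card {N : ℕ} :
    ((Finset.univ.filter (fun p : Fin N × Fin N => p.1 < p.2)).filter
      (fun p => p.2 = Fin.rev p.1)).card = N / 2 := by
  rw [Finset.filter_filter, ← Finset.card_range (N / 2)]
  refine Finset.card_bij' (fun p _ => (p.1 : ℕ)) (fun m hm =>
      (⟨m, by simp only [Finset.mem_range] at hm; omega⟩, Fin.rev ⟨m, by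
        simp only [Finset.mem_range] at hm; omega⟩)) ?_ ?_ ?_ ?_
  · rintro ⟨a, b⟩ ha
    simp only [Finset.mem_filter, Finset.mem_univ, true_and] at ha
    obtain ⟨hlt, heq⟩ := ha
    rw [heq, Fin.lt_def, Fin.val_rev] at hlt
    have h2 := a.isLt
    simp only [Finset.mem_range]
    omega
  · intro m hm
    simp only [Finset.mem_range] at hm
    simp only [Finset.mem_filter, Finset.mem_univ, true_and, Fin.lt_def, Fin.val_rev,
      and_true]
    omega
  · rintro ⟨a, b⟩ ha
    simp only [Finset.mem_filter, Finset.mem_univ, true_and] at ha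
    obtain ⟨hlt, heq⟩ := ha
    simp only [Fin.eta]
    rw [heq]
  · intro m hm; rfl

lemma key_prod {N : ℕ} (q : Fin N → Fin N → ℂ)
    (h1 : ∀ a, q a a = 1)
    (h2 : ∀ a b, q a b * q b a = 1)
    (h3 : ∀ a b, q a b * q a (Fin.rev b) = 1)
    (h4 : ∀ a b, q a b = q (Fin.rev a) (Fin.rev b)) :
    ∏ p ∈ Finset.univ.filter (fun p : Fin N × Fin N => p.1 < p.2), (-(q p.1 p.2))
      = (-1 : ℂ) ^ (N / 2) := by
  rw [← Finset.prod_filter_mul_prod_filter_not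
    (Finset.univ.filter (fun p : Fin N × Fin N => p.1 < p.2))
    (fun p => p.2 = Fin.rev p.1) (fun p => -(q p.1 p.2))]
  have hfix : ∀ p ∈ (Finset.univ.filter (fun p : Fin N × Fin N => p.1 < p.2)).filter
      (fun p => p.2 = Fin.rev p.1), -(q p.1 p.2) = (-1 : ℂ) := by
    rintro ⟨a, b⟩ hp
    simp only [Finset.mem_filter] at hp
    obtain ⟨-, heq⟩ := hp
    have : q a (Fin.rev a) = 1 := by
      have := h3 a a
      rw [h1 a, one_mul] at this
      exact this
    rw [heq]
    simp [this]
  rw [Finset.prod_congr rfl hfix, Finset.prod_const, fixed_card]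
  have hrest : ∏ p ∈ (Finset.univ.filter (fun p : Fin N × Fin N => p.1 < p.2)).filter
      (fun p => ¬ p.2 = Fin.rev p.1), (-(q p.1 p.2)) = 1 := by
    refine Finset.prod_involution (fun p _ => (Fin.rev p.2, Fin.rev p.1)) ?_ ?_ ?_ ?_
    · rintro ⟨a, b⟩ hp
      have : q (Fin.rev b) (Fin.rev a) = q b a := (h4 b a).symm
      simp only [neg_mul_neg, this]
      exact h2 a b
    · rintro ⟨a, b⟩ hp -
      simp only [Finset.mem_filter] at hp
      intro hcontra
      apply hp.2
      have := congrArg Prod.snd hcontra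
      simpa using this.symm
    · rintro ⟨a, b⟩ hp
      simp only [Finset.mem_filter, Finset.mem_univ, true_and] at hp ⊢
      refine ⟨Fin.rev_lt_rev.mpr hp.1, ?_⟩
      intro hcontra
      rw [Fin.rev_rev] at hcontra
      exact hp.2 hcontra.symm
    · rintro ⟨a, b⟩ hp
      simp [Fin.rev_rev]
  rw [hrest, mul_one]

end EpsQAux

/-- reversal identity for the q-epsilon tensor:
`ε_{q^{-1}}^{j_1...j_N} = (−1)^⌊N/2⌋ ε_q^{j_N...j_1}`, where `ε_{q^{-1}}` is
built from the inverse parameters `q(a,b)⁻¹`. -/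
theorem epsQ_reversal {N : ℕ} (q : Fin N → Fin N → ℂ)
    (h1 : ∀ a, q a a = 1)
    (h2 : ∀ a b, q a b * q b a = 1)
    (h3 : ∀ a b, q a b * q a (Fin.rev b) = 1)
    (h4 : ∀ a b, q a b = q (Fin.rev a) (Fin.rev b)) :
    ∀ j : Fin N → Fin N,
      epsQ (fun a b => (q a b)⁻¹) j = (-1 : ℂ) ^ (N / 2) * epsQ q (j ∘ Fin.rev) := by
  intro j
  by_cases hj : Function.Injective j
  · have hjr : Function.Injective (j ∘ Fin.rev) := hj.comp Fin.rev_injective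
    have hbij : Function.Bijective j := Finite.injective_iff_bijective.mp hj
    set σ : Equiv.Perm (Fin N) := Equiv.ofBijective j hbij with hσdef
    have hσj : ∀ x, σ.symm (j x) = x := fun x => Equiv.ofBijective_symm_apply_apply j hbij x
    have hjσ : ∀ x, j (σ.symm x) = x := fun x => Equiv.ofBijective_apply_symm_apply j hbij x
    rw [epsQ, epsQ, if_pos hj, if_pos hjr]
    simp only [Function.comp_apply]
    set P1 := ∏ p ∈ Finset.univ.filter
        (fun p : Fin N × Fin N => p.1 < p.2 ∧ j p.2 < j p.1),
        (-(q (j p.2) (j p.1))) with hP1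
    set P2 := ∏ p ∈ Finset.univ.filter
        (fun p : Fin N × Fin N => p.1 < p.2 ∧ j p.1 < j p.2),
        (-(q (j p.2) (j p.1))) with hP2
    set P2' := ∏ p ∈ Finset.univ.filter
        (fun p : Fin N × Fin N => p.1 < p.2 ∧ j p.1 < j p.2),
        (-(q (j p.1) (j p.2))) with hP2'
    have e1 : ∏ p ∈ Finset.univ.filter
        (fun p : Fin N × Fin N => p.1 < p.2 ∧ j p.2 < j p.1),
        (-((q (j p.1) (j p.2))⁻¹)) = P1 := by
      refine Finset.prod_congr rfl fun p hp => ?_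
      have : (q (j p.1) (j p.2))⁻¹ = q (j p.2) (j p.1) :=
        (eq_inv_of_mul_eq_one_left (h2 (j p.2) (j p.1))).symm
      rw [this]
    have e2 : ∏ p ∈ Finset.univ.filter
        (fun p : Fin N × Fin N => p.1 < p.2 ∧ j (Fin.rev p.2) < j (Fin.rev p.1)),
        (-(q (j (Fin.rev p.1)) (j (Fin.rev p.2)))) = P2 := by
      refine Finset.prod_nbij' (fun p => (Fin.rev p.2, Fin.rev p.1))
        (fun p => (Fin.rev p.2, Fin.rev p.1)) ?_ ?_ ?_ ?_ ?_
      · rintro ⟨a, b⟩ hp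
        simp only [Finset.mem_filter, Finset.mem_univ, true_and] at hp ⊢
        exact ⟨Fin.rev_lt_rev.mpr hp.1, hp.2⟩
      · rintro ⟨a, b⟩ hp
        simp only [Finset.mem_filter, Finset.mem_univ, true_and] at hp ⊢
        refine ⟨Fin.rev_lt_rev.mpr hp.1, ?_⟩
        simpa [Fin.rev_rev] using hp.2
      · rintro ⟨a, b⟩ hp
        simp [Fin.rev_rev]
      · rintro ⟨a, b⟩ hp
        simp [Fin.rev_rev]
      · rintro ⟨a, b⟩ hp
        rfl
    have e3 : P2' * P2 = 1 := by
      rw [hP2, hP2', ← Finset.prod_mul_distrib]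
      refine Finset.prod_eq_one fun p hp => ?_
      rw [neg_mul_neg]
      exact h2 (j p.1) (j p.2)
    have e4 : P1 = ∏ r ∈ Finset.univ.filter
        (fun r : Fin N × Fin N => r.1 < r.2 ∧ σ.symm r.2 < σ.symm r.1), (-(q r.1 r.2)) := by
      rw [hP1]
      refine Finset.prod_nbij' (fun p => (j p.2, j p.1))
        (fun r => (σ.symm r.2, σ.symm r.1)) ?_ ?_ ?_ ?_ ?_
      · rintro ⟨a, b⟩ hp
        simp only [Finset.mem_filter, Finset.mem_univ, true_and, hσj] at hp ⊢
        exact ⟨hp.2, hp.1⟩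
      · rintro ⟨a, b⟩ hp
        simp only [Finset.mem_filter, Finset.mem_univ, true_and, hjσ] at hp ⊢
        exact ⟨hp.2, hp.1⟩
      · rintro ⟨a, b⟩ hp
        simp [hσj]
      · rintro ⟨a, b⟩ hp
        simp [hjσ]
      · rintro ⟨a, b⟩ hp
        rfl
    have e5 : P2' = ∏ r ∈ Finset.univ.filter
        (fun r : Fin N × Fin N => r.1 < r.2 ∧ σ.symm r.1 < σ.symm r.2), (-(q r.1 r.2)) := by
      rw [hP2']
      refine Finset.prod_nbij' (fun p => (j p.1, j p.2))
        (fun r => (σ.symm r.1, σ.symm r.2)) ?_ ?_ ?_ ?_ ?_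
      · rintro ⟨a, b⟩ hp
        simp only [Finset.mem_filter, Finset.mem_univ, true_and, hσj] at hp ⊢
        exact ⟨hp.2, hp.1⟩
      · rintro ⟨a, b⟩ hp
        simp only [Finset.mem_filter, Finset.mem_univ, true_and, hjσ] at hp ⊢
        exact ⟨hp.2, hp.1⟩
      · rintro ⟨a, b⟩ hp
        simp [hσj]
      · rintro ⟨a, b⟩ hp
        simp [hjσ]
      · rintro ⟨a, b⟩ hp
        rfl
    have e6 : (∏ r ∈ Finset.univ.filter
        (fun r : Fin N × Fin N => r.1 < r.2 ∧ σ.symm r.2 < σ.symm r.1), (-(q r.1 r.2))) *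
        (∏ r ∈ Finset.univ.filter
        (fun r : Fin N × Fin N => r.1 < r.2 ∧ σ.symm r.1 < σ.symm r.2), (-(q r.1 r.2)))
        = (-1 : ℂ) ^ (N / 2) := by
      have hA : Finset.univ.filter
          (fun r : Fin N × Fin N => r.1 < r.2 ∧ σ.symm r.2 < σ.symm r.1)
          = (Finset.univ.filter (fun r : Fin N × Fin N => r.1 < r.2)).filter
            (fun r => σ.symm r.2 < σ.symm r.1) := by
        rw [Finset.filter_filter]
      have hB : Finset.univ.filter
          (fun r : Fin N × Fin N => r.1 < r.2 ∧ σ.symm r.1 < σ.symm r.2)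
          = (Finset.univ.filter (fun r : Fin N × Fin N => r.1 < r.2)).filter
            (fun r => ¬ σ.symm r.2 < σ.symm r.1) := by
        rw [Finset.filter_filter]
        apply Finset.filter_congr
        rintro ⟨a, b⟩ -
        simp only [eq_iff_iff, and_congr_right_iff]
        intro hab
        constructor
        · exact fun h => lt_asymm h
        · intro h
          rcases ((σ.symm.injective.ne (ne_of_lt hab)).lt_or_gt) with h' | h'
          · exact h'
          · exact absurd h' h
      rw [hA, hB, Finset.prod_filter_mul_prod_filter_not]
      exact key_prod q h1 h2 h3 h4
    rw [e1, e2]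
    have hfin : P1 * P2' = (-1 : ℂ) ^ (N / 2) := by rw [e4, e5]; exact e6
    calc P1 = P1 * (P2' * P2) := by rw [e3, mul_one]
      _ = (P1 * P2') * P2 := by ring
      _ = (-1 : ℂ) ^ (N / 2) * P2 := by rw [hfin]
  · have hjr : ¬ Function.Injective (j ∘ Fin.rev) := by
      intro h
      apply hj
      have := h.comp Fin.rev_injective
      simpa [Function.comp_def, Fin.rev_rev] using this
    rw [epsQ, epsQ, if_neg hj, if_neg hjr, mul_zero]
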